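/- Let a_k(N) = σ√(24/N) for all k and θ_k = (k-1)π/N. Then for every fixed ω ∈ ℝ², the product ∏_{k=1}^N sinc((a_k(N)/2) u_{θ_k}ᵀ ω) converges to exp(−σ²‖ω‖²/2) as N → ∞. -/

import Mathlib

open Real Filter

/-- Normalized sinc: `sinc x = sin x / x`, with `sinc 0 = 1`. -/
noncomputable def sinc (x : ℝ) : ℝ := if x = 0 then 1 else Real.sin x / x

lemma sinc_approx {x : ℝ} (hx : |x| ≤ 1) : |_root_.sinc x - (1 - x^2/6)| ≤ |x|^3 * (5/96) := by
  rcases eq_or_ne x 0 with rfl | h0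
  · simp [_root_.sinc]
  · have hb := Real.sin_bound hx
    rw [_root_.sinc, if_neg h0]
    have hxpos : 0 < |x| := abs_pos.mpr h0
    have : Real.sin x / x - (1 - x^2/6) = (Real.sin x - (x - x^3/6)) / x := by
      field_simp
    rw [this, abs_div, div_le_iff₀ hxpos]
    calc |Real.sin x - (x - x^3/6)| ≤ |x|^4 * (5/96) := by
          have h4 := mul_le_mul_of_nonneg_left hx (pow_nonneg (abs_nonneg x) 4)
          have e : |x|^5 = |x|^4 * |x| := by ring
          nlinarith [pow_nonneg (abs_nonneg x) 4]
      _ = |x|^3 * (5/96) * |x| := by ring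

lemma sinc_ge_half {x : ℝ} (hx : |x| ≤ 1/2) : 1/2 ≤ _root_.sinc x := by
  have h := sinc_approx (hx.trans (by norm_num))
  have h2 : x^2 ≤ 1/4 := by nlinarith [sq_abs x, abs_nonneg x]
  have h3 : |x|^3 ≤ 1/8 := by
    calc |x|^3 ≤ (1/2)^3 := pow_le_pow_left₀ (abs_nonneg x) hx 3
      _ = 1/8 := by norm_num
  have := abs_le.mp h
  nlinarith

lemma log_sinc_bound {x : ℝ} (hx : |x| ≤ 1/2) : |Real.log (_root_.sinc x) + x^2/6| ≤ |x|^3 := by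
  have h := sinc_approx (hx.trans (by norm_num))
  have hpos : (0:ℝ) < _root_.sinc x := lt_of_lt_of_le (by norm_num) (sinc_ge_half hx)
  have hup : Real.log (_root_.sinc x) ≤ _root_.sinc x - 1 := Real.log_le_sub_one_of_pos hpos
  have hlo : 1 - (_root_.sinc x)⁻¹ ≤ Real.log (_root_.sinc x) := Real.one_sub_inv_le_log_of_pos hpos
  set y := _root_.sinc x with hy
  have hhalf : 1/2 ≤ y := sinc_ge_half hx
  have hlo2 : (y-1) - 2*(y-1)^2 ≤ Real.log y := by
    have key : (y-1) - 2*(y-1)^2 ≤ 1 - y⁻¹ := by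
      have h1 : 1 - y⁻¹ = (y-1) / y := by field_simp
      rw [h1, le_div_iff₀ hpos]
      nlinarith [mul_nonneg (sq_nonneg (y-1)) (by linarith : (0:ℝ) ≤ 2*y - 1)]
    linarith
  have habs := abs_le.mp h
  have ha2 : x^2 = |x|^2 := (sq_abs x).symm
  have hx2 : x^2 ≤ 1/4 := by nlinarith [sq_abs x, abs_nonneg x]
  rw [abs_le]
  constructor
  · have ht2 : (y-1)^2 ≤ (x^2/6 + |x|^3*(5/96))^2 := by
      have h1 : -(x^2/6) - |x|^3*(5/96) ≤ y - 1 := by linarith [habs.1]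
      have h2 : y - 1 ≤ -(x^2/6) + |x|^3*(5/96) := by linarith [habs.2]
      nlinarith [sq_nonneg x, pow_nonneg (abs_nonneg x) 3]
    have ha3 : |x|^3 ≤ x^2 * (1/2) := by
      have e : |x|^3 = |x|^2 * |x| := by ring
      rw [e, ← ha2]
      exact mul_le_mul_of_nonneg_left hx (by positivity)
    nlinarith [hlo2, pow_nonneg (abs_nonneg x) 3, sq_nonneg x, habs.1]
  · nlinarith [hup, habs.2, pow_nonneg (abs_nonneg x) 3]

lemma sum_exp_zero (N : ℕ) (hN : 2 ≤ N) :
    ∑ k ∈ Finset.range N, Complex.exp ((k : ℂ) * (2 * π / N * Complex.I)) = 0 := by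
  have hNpos : 0 < N := by omega
  have hN0 : (N:ℂ) ≠ 0 := by exact_mod_cast hNpos.ne'
  set z := Complex.exp (2 * π / N * Complex.I) with hz
  have hzk : ∀ k : ℕ, Complex.exp ((k : ℂ) * (2 * π / N * Complex.I)) = z ^ k := by
    intro k; rw [hz, ← Complex.exp_nat_mul]
  simp only [hzk]
  have hzN : z ^ N = 1 := by
    rw [hz, ← Complex.exp_nat_mul]
    have : (N:ℂ) * (2 * π / N * Complex.I) = (1:ℤ) * (2 * π * Complex.I) := by
      field_simp
      norm_num
    rw [this, Complex.exp_int_mul_two_pi_mul_I]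
  have hz1 : z ≠ 1 := by
    rw [hz, Ne, Complex.exp_eq_one_iff]
    rintro ⟨n, hn⟩
    have hπ : (π:ℂ) ≠ 0 := by exact_mod_cast Real.pi_ne_zero
    have hI : Complex.I ≠ 0 := Complex.I_ne_zero
    have hnN : ((n * N : ℤ) : ℂ) = 1 := by
      push_cast
      field_simp at hn
      have h2 : (2*(π:ℂ)*Complex.I) * ((n:ℂ)*N) = (2*(π:ℂ)*Complex.I) * 1 := by
        linear_combination (-(2*(π:ℂ)*Complex.I)) * hn
      exact mul_left_cancel₀ (by simp [hπ, hI]) h2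
    have h1 : (n * N : ℤ) = 1 := by exact_mod_cast hnN
    have hdvd : (N:ℤ) ∣ 1 := ⟨n, by linarith⟩
    have hle : (N:ℤ) ≤ 1 := Int.le_of_dvd one_pos hdvd
    have : (2:ℤ) ≤ N := by exact_mod_cast hN
    omega
  rw [geom_sum_eq hz1, hzN]
  simp

lemma sum_cos_sin_zero (N : ℕ) (hN : 2 ≤ N) :
    (∑ k ∈ Finset.range N, Real.cos (2 * ((k:ℝ) * π / N)) = 0) ∧
    (∑ k ∈ Finset.range N, Real.sin (2 * ((k:ℝ) * π / N)) = 0) := by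
  have h := sum_exp_zero N hN
  have hterm : ∀ k : ℕ, Complex.exp ((k : ℂ) * (2 * π / N * Complex.I)) =
      Complex.exp ((2 * ((k:ℝ) * π / N) : ℝ) * Complex.I) := by
    intro k
    congr 1
    push_cast
    ring
  simp only [hterm] at h
  constructor
  · have := congrArg Complex.re h
    rw [Complex.re_sum] at this
    simpa only [Complex.exp_ofReal_mul_I_re, Complex.zero_re] using this
  · have := congrArg Complex.im h
    rw [Complex.im_sum] at this
    simpa only [Complex.exp_ofReal_mul_I_im, Complex.zero_im] using this

lemma sum_sq_proj (N : ℕ) (hN : 2 ≤ N) (a b : ℝ) :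
    ∑ k ∈ Finset.range N, (Real.cos ((k:ℝ) * π / N) * a + Real.sin ((k:ℝ) * π / N) * b)^2
      = N / 2 * (a^2 + b^2) := by
  obtain ⟨hc, hs⟩ := sum_cos_sin_zero N hN
  have hterm : ∀ k ∈ Finset.range N,
      (Real.cos ((k:ℝ) * π / N) * a + Real.sin ((k:ℝ) * π / N) * b)^2
        = (a^2 + b^2)/2 + ((a^2 - b^2)/2) * Real.cos (2 * ((k:ℝ) * π / N))
          + (a*b) * Real.sin (2 * ((k:ℝ) * π / N)) := by
    intro k _
    have h1 := Real.cos_sq ((k:ℝ) * π / N)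
    have h2 := Real.sin_sq ((k:ℝ) * π / N)
    have h3 := Real.sin_two_mul ((k:ℝ) * π / N)
    linear_combination (a^2-b^2)*h1 + b^2*h2 - a*b*h3
  rw [Finset.sum_congr rfl hterm]
  rw [Finset.sum_add_distrib, Finset.sum_add_distrib, ← Finset.mul_sum, ← Finset.mul_sum,
    hc, hs, Finset.sum_const, Finset.card_range]
  ring

/-- With `a_k(N) = σ√(24/N)` and `θ_k = kπ/N`, for every `ω ∈ ℝ²` the product
`∏_{k<N} sinc((a_k(N)/2) u_{θ_k}ᵀω)` converges to `exp(−σ²‖ω‖²/2)` as `N → ∞`. -/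
theorem boxspline_fourier_tendsto_gaussian (σ : ℝ) (hσ : 0 < σ) (ω : ℝ × ℝ) :
    Tendsto (fun N : ℕ => ∏ k ∈ Finset.range N,
        _root_.sinc (σ * Real.sqrt (24 / N) / 2 *
          (Real.cos (k * π / N) * ω.1 + Real.sin (k * π / N) * ω.2)))
      atTop (nhds (Real.exp (-σ^2 * (ω.1^2 + ω.2^2) / 2))) := by
  set a := ω.1
  set b := ω.2
  set B : ℝ := |a| + |b| with hB
  set L : ℝ := σ^2 * (a^2 + b^2) / 2 with hL
  set M : ℝ := 3 * σ^2 * (a^2 + b^2) with hM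
  set x : ℕ → ℕ → ℝ := fun N k => σ * Real.sqrt (24 / N) / 2 *
      (Real.cos ((k:ℝ) * π / N) * a + Real.sin ((k:ℝ) * π / N) * b) with hx
  set c : ℕ → ℝ := fun N => σ * Real.sqrt (24 / N) / 2 * B with hcdef
  set S : ℕ → ℝ := fun N => ∑ k ∈ Finset.range N, Real.log (_root_.sinc (x N k)) with hS
  -- c N → 0
  have h24 : Tendsto (fun N : ℕ => (24:ℝ) / N) atTop (nhds 0) :=
    tendsto_const_div_atTop_nhds_zero_nat 24
  have hsqrt : Tendsto (fun N : ℕ => Real.sqrt (24 / N)) atTop (nhds 0) := by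
    have := (Real.continuous_sqrt.tendsto 0).comp h24
    simpa only [Function.comp_def, Real.sqrt_zero] using this
  have hc0 : Tendsto c atTop (nhds 0) := by
    have : Tendsto (fun N : ℕ => σ * Real.sqrt (24 / N) / 2 * B) atTop
        (nhds (σ * 0 / 2 * B)) := ((hsqrt.const_mul σ).div_const 2).mul_const B
    simpa only [mul_zero, zero_div, zero_mul] using this
  -- uniform bound on |x N k|
  have hxb : ∀ N k : ℕ, |x N k| ≤ c N := by
    intro N k
    have hnn : 0 ≤ σ * Real.sqrt (24 / N) / 2 := by positivity
    have hproj : |Real.cos ((k:ℝ) * π / N) * a + Real.sin ((k:ℝ) * π / N) * b| ≤ B := by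
      calc |Real.cos ((k:ℝ) * π / N) * a + Real.sin ((k:ℝ) * π / N) * b|
          ≤ |Real.cos ((k:ℝ) * π / N) * a| + |Real.sin ((k:ℝ) * π / N) * b| := abs_add_le _ _
        _ = |Real.cos ((k:ℝ) * π / N)| * |a| + |Real.sin ((k:ℝ) * π / N)| * |b| := by
            rw [abs_mul, abs_mul]
        _ ≤ 1 * |a| + 1 * |b| := add_le_add
            (mul_le_mul_of_nonneg_right (Real.abs_cos_le_one _) (abs_nonneg _))
            (mul_le_mul_of_nonneg_right (Real.abs_sin_le_one _) (abs_nonneg _))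
        _ = B := by rw [hB]; ring
    calc |x N k| = σ * Real.sqrt (24 / N) / 2 *
          |Real.cos ((k:ℝ) * π / N) * a + Real.sin ((k:ℝ) * π / N) * b| := by
          rw [hx, abs_mul, abs_of_nonneg hnn]
      _ ≤ σ * Real.sqrt (24 / N) / 2 * B := mul_le_mul_of_nonneg_left hproj hnn
  -- key eventual facts
  have hev : ∀ᶠ N : ℕ in atTop, (2 ≤ N ∧ c N ≤ 1/2) :=
    (eventually_ge_atTop 2).and (hc0.eventually (eventually_le_nhds (by norm_num)))
  have hkey : ∀ N : ℕ, 2 ≤ N → c N ≤ 1/2 →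
      ((∏ k ∈ Finset.range N, _root_.sinc (x N k)) = Real.exp (S N) ∧ |S N - (-L)| ≤ c N * M) := by
    intro N hN2 hcN
    have hNpos : (0:ℝ) < N := by exact_mod_cast Nat.lt_of_lt_of_le two_pos hN2
    have hxk : ∀ k : ℕ, |x N k| ≤ 1/2 := fun k => (hxb N k).trans hcN
    have hcnn : 0 ≤ c N := (abs_nonneg _).trans (hxb N 0)
    constructor
    · rw [hS, Real.exp_sum]
      exact Finset.prod_congr rfl fun k _ =>
        (Real.exp_log (lt_of_lt_of_le (by norm_num) (sinc_ge_half (hxk k)))).symm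
    · -- sum of squares identity
      have hsq : Real.sqrt (24 / N) ^ 2 = 24 / N := Real.sq_sqrt (by positivity)
      have hsum2 : ∑ k ∈ Finset.range N, (x N k)^2 = M := by
        have hstep : ∀ k ∈ Finset.range N, (x N k)^2 = (σ * Real.sqrt (24 / N) / 2)^2 *
            (Real.cos ((k:ℝ) * π / N) * a + Real.sin ((k:ℝ) * π / N) * b)^2 := by
          intro k _; rw [hx]; ring
        rw [Finset.sum_congr rfl hstep, ← Finset.mul_sum, sum_sq_proj N hN2 a b, hM]
        have he : (σ * Real.sqrt (24 / N) / 2)^2 = σ^2 * (24 / N) / 4 := by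
          rw [div_pow, mul_pow, hsq]; norm_num
        rw [he]
        field_simp
        ring
      have hLsum : ∑ k ∈ Finset.range N, (x N k)^2 / 6 = L := by
        rw [← Finset.sum_div, hsum2, hM, hL]; ring
      have hdecomp : S N - (-L) = ∑ k ∈ Finset.range N,
          (Real.log (_root_.sinc (x N k)) + (x N k)^2 / 6) := by
        rw [Finset.sum_add_distrib, hLsum, hS]; ring
      rw [hdecomp]
      calc |∑ k ∈ Finset.range N, (Real.log (_root_.sinc (x N k)) + (x N k)^2 / 6)|
          ≤ ∑ k ∈ Finset.range N, |Real.log (_root_.sinc (x N k)) + (x N k)^2 / 6| :=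
            Finset.abs_sum_le_sum_abs _ _
        _ ≤ ∑ k ∈ Finset.range N, c N * (x N k)^2 := by
            apply Finset.sum_le_sum
            intro k _
            calc |Real.log (_root_.sinc (x N k)) + (x N k)^2 / 6| ≤ |x N k|^3 :=
                  log_sinc_bound (hxk k)
              _ = |x N k| * (x N k)^2 := by rw [← sq_abs]; ring
              _ ≤ c N * (x N k)^2 := mul_le_mul_of_nonneg_right (hxb N k) (sq_nonneg _)
        _ = c N * M := by rw [← Finset.mul_sum, hsum2]
  -- S tendsto -L
  have hStend : Tendsto S atTop (nhds (-L)) := by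
    rw [← tendsto_sub_nhds_zero_iff]
    rw [tendsto_zero_iff_abs_tendsto_zero]
    apply squeeze_zero' (g := fun N => c N * M)
    · exact Eventually.of_forall fun N => abs_nonneg _
    · filter_upwards [hev] with N hN
      exact (hkey N hN.1 hN.2).2
    · simpa only [zero_mul] using hc0.mul_const M
  have hfinal : Tendsto (fun N => Real.exp (S N)) atTop (nhds (Real.exp (-L))) := by
    have := (Real.continuous_exp.tendsto (-L)).comp hStend
    simpa only [Function.comp_def] using this
  have hgoal : Real.exp (-L) = Real.exp (-σ^2 * (a^2 + b^2) / 2) := by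
    congr 1; rw [hL]; ring
  rw [← hgoal]
  apply hfinal.congr'
  filter_upwards [hev] with N hN
  exact ((hkey N hN.1 hN.2).1).symm
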